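/- Define g(λ,w) = e^λ b(λ+w) - e^λ b(λ) - b(w) + b(0), where b(w) = 1/(1+e^w). For all λ ≥ 0 and w ≥ 0, g(λ,w) ≤ 0. -/
import Mathlib


noncomputable def b : ℝ → ℝ := fun w => 1 / (1 + Real.exp w)

theorem g_nonpos (lam w : ℝ) (hlam : 0 ≤ lam) (hw : 0 ≤ w) :
    Real.exp lam * b (lam + w) - Real.exp lam * b lam - b w + b 0 ≤ 0 := by
  have ha : 1 ≤ Real.exp lam := Real.one_le_exp hlam
  have hc : 1 ≤ Real.exp w := Real.one_le_exp hw
  set a := Real.exp lam with hA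
  set c := Real.exp w with hC
  have hac : Real.exp (lam + w) = a * c := Real.exp_add lam w
  simp only [b, hac, Real.exp_zero]
  have h1 : (0:ℝ) < 1 + a * c := by nlinarith
  have h2 : (0:ℝ) < 1 + a := by linarith
  have h3 : (0:ℝ) < 1 + c := by linarith
  have key : a * (1 / (1 + a * c)) - a * (1 / (1 + a)) - 1 / (1 + c) + 1 / (1 + 1)
      = (-1 + c - a + a * c^2 + 2 * a^2 - a^2 * c - a^2 * c^2)
        / (2 * (1 + a * c) * (1 + a) * (1 + c)) := by
    field_simp
    ring
  rw [key]
  apply div_nonpos_of_nonpos_of_nonneg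
  · nlinarith [mul_nonneg (sub_nonneg.2 ha) (sub_nonneg.2 hc),
      mul_nonneg (mul_nonneg (sub_nonneg.2 ha) (sub_nonneg.2 ha)) (sub_nonneg.2 hc),
      mul_nonneg (mul_nonneg (sub_nonneg.2 ha) (sub_nonneg.2 hc)) (sub_nonneg.2 hc),
      mul_nonneg (mul_nonneg (mul_nonneg (sub_nonneg.2 ha) (sub_nonneg.2 ha)) (sub_nonneg.2 hc)) (sub_nonneg.2 hc)]
  · positivity
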